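/- Let H and K be real Hilbert spaces, let d : H → K be a continuous linear map, and set W = ker d. Let B_H : H × H → ℝ be a symmetric bilinear form and c₁, c₂ > 0 constants with c₁‖x‖² ≤ B_H(x,x) ≤ c₂‖x‖² for all x ∈ H, and let B_K : K × K → ℝ be a bilinear form and k₁ > 0 a constant with k₁‖y‖² ≤ B_K(y,y) for all y ∈ K. Assume the Poincaré–Friedrichs inequality holds on the orthogonal complement of W: there is C > 0 such that ‖v‖ ≤ C·‖d v‖ for all v ∈ Wᗮ. Then for every u ∈ H satisfying B_H(u, w) = 0 for all w ∈ W, one has B_H(u,u) ≤ (c₂ C² / k₁)·B_K(d u, d u). -/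

import Mathlib

/-- Poincaré–Friedrichs inequality with respect to equivalent discrete inner products:
if `B_H` is a symmetric bilinear form equivalent to the squared norm on `H`, `B_K` is
bounded below by the squared norm on `K`, and the Poincaré–Friedrichs inequality
`‖v‖ ≤ C‖d v‖` holds on `(ker d)ᗮ`, then every `u` that is `B_H`-orthogonal to
`ker d` satisfies `B_H(u,u) ≤ (c₂ C²/k₁)·B_K(d u, d u)`. -/
theorem poincare_friedrichs_discrete
    {H K : Type*}
    [NormedAddCommGroup H] [InnerProductSpace ℝ H] [CompleteSpace H]
    [NormedAddCommGroup K] [InnerProductSpace ℝ K] [CompleteSpace K]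
    (d : H →L[ℝ] K)
    (B_H : H →ₗ[ℝ] H →ₗ[ℝ] ℝ) (B_K : K →ₗ[ℝ] K →ₗ[ℝ] ℝ)
    (hsymm : ∀ x y : H, B_H x y = B_H y x)
    {c₁ c₂ k₁ C : ℝ} (hc₁ : 0 < c₁) (hc₂ : 0 < c₂) (hk₁ : 0 < k₁) (hC : 0 < C)
    (hBH_low : ∀ x : H, c₁ * ‖x‖ ^ 2 ≤ B_H x x)
    (hBH_up : ∀ x : H, B_H x x ≤ c₂ * ‖x‖ ^ 2)
    (hBK_low : ∀ y : K, k₁ * ‖y‖ ^ 2 ≤ B_K y y)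
    (hPF : ∀ v ∈ (LinearMap.ker (d : H →ₗ[ℝ] K))ᗮ, ‖v‖ ≤ C * ‖d v‖) :
    ∀ u : H, (∀ w ∈ LinearMap.ker (d : H →ₗ[ℝ] K), B_H u w = 0) →
      B_H u u ≤ (c₂ * C ^ 2 / k₁) * B_K (d u) (d u) := by
  intro u hu
  haveI : CompleteSpace (LinearMap.ker (d : H →ₗ[ℝ] K)) :=
    (ContinuousLinearMap.isClosed_ker d).completeSpace_coe
  set W := LinearMap.ker (d : H →ₗ[ℝ] K) with hW
  set w : H := (W.orthogonalProjectionOnto u : H) with hw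
  set v : H := u - w with hv
  have hwW : w ∈ W := (W.orthogonalProjectionOnto u).2
  have hvW : v ∈ Wᗮ := W.sub_starProjection_mem_orthogonal u
  have hdw : d w = 0 := hwW
  have hdu : d u = d v := by
    have : d u = d v + d w := by
      rw [hv]; simp [map_sub]
    simp [this, hdw]
  -- nonnegativity of B_H on the diagonal
  have hBHnn : ∀ x : H, 0 ≤ B_H x x := fun x =>
    le_trans (by positivity) (hBH_low x)
  -- B_H u v = B_H u u
  have huv : B_H u v = B_H u u := by
    have := hu w hwW
    rw [hv, map_sub, this, sub_zero]
  -- Cauchy-Schwarz style: B_H u u ≤ B_H v v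
  have hkey : B_H u u ≤ B_H v v := by
    set a := B_H u u with ha
    set b := B_H v v with hb
    rcases le_or_gt a 0 with h | h
    · exact le_trans h (hBHnn v)
    · rcases eq_or_lt_of_le (hBHnn v) with hb0 | hb0
      · -- b = 0 forces v = 0
        have hv0 : v = 0 := by
          have h1 := hBH_low v
          have hn : ‖v‖ ^ 2 ≤ 0 := by nlinarith
          have : ‖v‖ = 0 := by nlinarith [sq_nonneg ‖v‖, norm_nonneg v]
          exact norm_eq_zero.mp this
        have : a = 0 := by
          rw [← huv, hv0, map_zero]
        linarith
      · -- expand B_H (b•u - a•v) (b•u - a•v) ≥ 0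
        have hexp : 0 ≤ b ^ 2 * a - 2 * a * b * a + a ^ 2 * b := by
          have h0 := hBHnn (b • u - a • v)
          have hvu : B_H v u = a := by rw [← hsymm, huv]
          simp only [map_sub, map_smul, LinearMap.sub_apply, LinearMap.smul_apply,
            smul_eq_mul] at h0
          rw [huv, hvu, ← ha, ← hb] at h0
          nlinarith [h0]
        nlinarith [mul_pos h hb0, hexp]
  have hnv : ‖v‖ ≤ C * ‖d v‖ := hPF v hvW
  have h1 : B_H v v ≤ c₂ * (C * ‖d v‖) ^ 2 := by
    have := hBH_up v
    have h2 : ‖v‖ ^ 2 ≤ (C * ‖d v‖) ^ 2 := by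
      apply sq_le_sq' <;> nlinarith [norm_nonneg v, norm_nonneg (d v)]
    nlinarith
  have h3 : ‖d v‖ ^ 2 ≤ B_K (d v) (d v) / k₁ := by
    have := hBK_low (d v)
    rw [le_div_iff₀ hk₁]
    nlinarith
  have hBKnn : 0 ≤ B_K (d v) (d v) := le_trans (by positivity) (hBK_low (d v))
  calc B_H u u ≤ B_H v v := hkey
    _ ≤ c₂ * (C * ‖d v‖) ^ 2 := h1
    _ = c₂ * C ^ 2 * ‖d v‖ ^ 2 := by ring
    _ ≤ c₂ * C ^ 2 * (B_K (d v) (d v) / k₁) := by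
        apply mul_le_mul_of_nonneg_left h3 (by positivity)
    _ = (c₂ * C ^ 2 / k₁) * B_K (d v) (d v) := by ring
    _ = (c₂ * C ^ 2 / k₁) * B_K (d u) (d u) := by rw [hdu]
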